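/- Consider the depth-D minimalist model (D ≥ 2) trained on a dataset (X, y) with dataset difficulty Q > 0. Let θ* be a global minimizer of L with L(θ*) = 0 that is balanced. Then the sharpness satisfies (1/N)·[σ₁² Q^{(D−1)/D} + (D−1) d₁² Q^{−1/D}] ≤ S(θ*) ≤ (1/N)·[σ₁² Q^{(D−1)/D} + (D−1)(Σ_{i=1}^r d_i²) Q^{−1/D}]. -/

import Mathlib

open scoped BigOperators

/-- Sharpness `S(θ) = λ_max(∇²L(θ))`: the largest eigenvalue of the Hessian of `L` at `θ`,
expressed as the supremum of the Hessian quadratic form over the unit sphere. -/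
noncomputable def sharpness {E : Type*} [NormedAddCommGroup E] [NormedSpace ℝ E]
    (L : E → ℝ) (θ : E) : ℝ :=
  sSup {c : ℝ | ∃ ξ : E, ‖ξ‖ = 1 ∧ fderiv ℝ (fderiv ℝ L) θ ξ ξ = c}

open Finset

section Aux

variable {ν ι κ : Type*} [Fintype ν] [Fintype ι] [Fintype κ] [DecidableEq κ]

noncomputable def mDer (X : ν → ι → ℝ) (n : ν) (θ : EuclideanSpace ℝ (ι ⊕ κ)) :
    EuclideanSpace ℝ (ι ⊕ κ) →L[ℝ] ℝ :=
  (∑ m, X n m * θ (Sum.inl m)) •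
      (∑ j, (∏ k ∈ Finset.univ.erase j, θ (Sum.inr k)) • EuclideanSpace.proj (𝕜 := ℝ) (Sum.inr j))
    + (∏ j, θ (Sum.inr j)) • (∑ m, X n m • EuclideanSpace.proj (𝕜 := ℝ) (Sum.inl m))

lemma mDer_apply (X : ν → ι → ℝ) (n : ν) (θ ξ : EuclideanSpace ℝ (ι ⊕ κ)) :
    mDer X n θ ξ
      = (∑ m, X n m * θ (Sum.inl m)) *
          (∑ j, (∏ k ∈ Finset.univ.erase j, θ (Sum.inr k)) * ξ (Sum.inr j))
        + (∏ j, θ (Sum.inr j)) * (∑ m, X n m * ξ (Sum.inl m)) := by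
  simp [mDer, ContinuousLinearMap.sum_apply, smul_eq_mul]

lemma hasFDerivAt_lin (X : ν → ι → ℝ) (n : ν) (θ : EuclideanSpace ℝ (ι ⊕ κ)) :
    HasFDerivAt (fun θ : EuclideanSpace ℝ (ι ⊕ κ) => ∑ m, X n m * θ (Sum.inl m))
      (∑ m, X n m • EuclideanSpace.proj (𝕜 := ℝ) (Sum.inl m)) θ := by
  have : (fun θ : EuclideanSpace ℝ (ι ⊕ κ) => ∑ m, X n m * θ (Sum.inl m))
      = ⇑(∑ m, X n m • EuclideanSpace.proj (𝕜 := ℝ) (Sum.inl m) :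
          EuclideanSpace ℝ (ι ⊕ κ) →L[ℝ] ℝ) := by
    funext θ; simp [ContinuousLinearMap.sum_apply, smul_eq_mul]
  rw [this]
  exact (∑ m, X n m • EuclideanSpace.proj (𝕜 := ℝ) (Sum.inl m) :
      EuclideanSpace ℝ (ι ⊕ κ) →L[ℝ] ℝ).hasFDerivAt

lemma hasFDerivAt_prod (θ : EuclideanSpace ℝ (ι ⊕ κ)) :
    HasFDerivAt (fun θ : EuclideanSpace ℝ (ι ⊕ κ) => ∏ j, θ (Sum.inr j))
      (∑ j, (∏ k ∈ Finset.univ.erase j, θ (Sum.inr k)) •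
        EuclideanSpace.proj (𝕜 := ℝ) (Sum.inr j)) θ := by
  refine HasFDerivAt.finset_prod fun j _ => ?_
  have h := (EuclideanSpace.proj (𝕜 := ℝ) (Sum.inr j) :
      EuclideanSpace ℝ (ι ⊕ κ) →L[ℝ] ℝ).hasFDerivAt (x := θ)
  exact h

lemma hasFDerivAt_phi (X : ν → ι → ℝ) (y : ν → ℝ) (n : ν) (θ : EuclideanSpace ℝ (ι ⊕ κ)) :
    HasFDerivAt
      (fun θ : EuclideanSpace ℝ (ι ⊕ κ) =>
        (∑ m, X n m * θ (Sum.inl m)) * (∏ j, θ (Sum.inr j)) - y n)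
      (mDer X n θ) θ :=
  ((hasFDerivAt_lin X n θ).mul (hasFDerivAt_prod θ)).sub_const (y n)

end Aux

section Aux2

variable {ν ι κ : Type*} [Fintype ν] [Fintype ι] [Fintype κ] [DecidableEq κ]

noncomputable def mPhi (X : ν → ι → ℝ) (y : ν → ℝ) (n : ν)
    (θ : EuclideanSpace ℝ (ι ⊕ κ)) : ℝ :=
  (∑ m, X n m * θ (Sum.inl m)) * (∏ j, θ (Sum.inr j)) - y n

noncomputable def mG (NN : ℝ) (X : ν → ι → ℝ) (y : ν → ℝ)
    (θ : EuclideanSpace ℝ (ι ⊕ κ)) : EuclideanSpace ℝ (ι ⊕ κ) →L[ℝ] ℝ :=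
  (1 / NN) • ∑ n, mPhi X y n θ • mDer X n θ

lemma hasFDerivAt_L (NN : ℝ) (hNN : NN ≠ 0) (X : ν → ι → ℝ) (y : ν → ℝ)
    (θ : EuclideanSpace ℝ (ι ⊕ κ)) :
    HasFDerivAt
      (fun θ : EuclideanSpace ℝ (ι ⊕ κ) => (1 / (2 * NN)) * ∑ n, (mPhi X y n θ) ^ 2)
      (mG NN X y θ) θ := by
  have h1 : HasFDerivAt
      (fun θ : EuclideanSpace ℝ (ι ⊕ κ) => ∑ n, (mPhi X y n θ) ^ 2)
      (∑ n, (mPhi X y n θ • mDer X n θ + mPhi X y n θ • mDer X n θ)) θ := by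
    refine HasFDerivAt.fun_sum fun n _ => ?_
    simp only [pow_two]
    exact (hasFDerivAt_phi X y n θ).fun_mul (hasFDerivAt_phi X y n θ)
  have h2 := h1.const_mul (1 / (2 * NN))
  refine h2.congr_fderiv (Eq.symm ?_)
  ext ξ
  simp only [mG, ContinuousLinearMap.smul_apply, ContinuousLinearMap.sum_apply,
    ContinuousLinearMap.add_apply, smul_eq_mul, Finset.mul_sum]
  refine Finset.sum_congr rfl fun n _ => ?_
  field_simp
  ring

lemma fderiv_L_eq (NN : ℝ) (hNN : NN ≠ 0) (X : ν → ι → ℝ) (y : ν → ℝ)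
    (L : EuclideanSpace ℝ (ι ⊕ κ) → ℝ)
    (hL : ∀ θ, L θ = (1 / (2 * NN)) * ∑ n, (mPhi X y n θ) ^ 2) :
    fderiv ℝ L = mG NN X y := by
  funext θ
  have : L = fun θ => (1 / (2 * NN)) * ∑ n, (mPhi X y n θ) ^ 2 := funext hL
  rw [this]
  exact (hasFDerivAt_L NN hNN X y θ).fderiv

end Aux2

section Aux3

variable {ν ι κ : Type*} [Fintype ν] [Fintype ι] [Fintype κ] [DecidableEq κ]

lemma diffAt_mDer (X : ν → ι → ℝ) (n : ν) (θs : EuclideanSpace ℝ (ι ⊕ κ)) :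
    DifferentiableAt ℝ (fun θ => mDer X n θ) θs := by
  unfold mDer
  refine DifferentiableAt.add ?_ ?_
  · refine DifferentiableAt.smul (hasFDerivAt_lin X n θs).differentiableAt ?_
    refine DifferentiableAt.fun_sum fun j _ => ?_
    refine DifferentiableAt.smul_const ?_ _
    refine (HasFDerivAt.finset_prod (u := Finset.univ.erase j)
      (g' := fun k => EuclideanSpace.proj (𝕜 := ℝ) (Sum.inr k))
      (fun k _ => ?_)).differentiableAt
    exact (EuclideanSpace.proj (𝕜 := ℝ) (Sum.inr k) :
      EuclideanSpace ℝ (ι ⊕ κ) →L[ℝ] ℝ).hasFDerivAt (x := θs)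
  · exact DifferentiableAt.smul_const (hasFDerivAt_prod θs).differentiableAt _

lemma diffAt_mG (NN : ℝ) (X : ν → ι → ℝ) (y : ν → ℝ) (θs : EuclideanSpace ℝ (ι ⊕ κ)) :
    DifferentiableAt ℝ (fun θ => mG NN X y θ) θs := by
  unfold mG
  refine DifferentiableAt.fun_const_smul ?_ _
  refine DifferentiableAt.fun_sum fun n _ => ?_
  exact DifferentiableAt.smul (hasFDerivAt_phi X y n θs).differentiableAt (diffAt_mDer X n θs)

lemma second_deriv (NN : ℝ) (hNN : NN ≠ 0) (X : ν → ι → ℝ) (y : ν → ℝ)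
    (L : EuclideanSpace ℝ (ι ⊕ κ) → ℝ)
    (hL : ∀ θ, L θ = (1 / (2 * NN)) * ∑ n, (mPhi X y n θ) ^ 2)
    (θs : EuclideanSpace ℝ (ι ⊕ κ)) (hphi0 : ∀ n, mPhi X y n θs = 0)
    (ξ : EuclideanSpace ℝ (ι ⊕ κ)) :
    fderiv ℝ (fderiv ℝ L) θs ξ ξ = (1 / NN) * ∑ n, (mDer X n θs ξ) ^ 2 := by
  rw [fderiv_L_eq NN hNN X y L hL]
  -- step: reduce to fderiv of (fun θ => mG θ ξ)
  have hflip : fderiv ℝ (fun θ => mG NN X y θ ξ) θs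
      = (fderiv ℝ (fun θ => mG NN X y θ) θs).flip ξ := by
    rw [fderiv_clm_apply (diffAt_mG NN X y θs) (differentiableAt_const ξ)]
    simp
  have happ : fderiv ℝ (mG NN X y) θs ξ ξ
      = fderiv ℝ (fun θ => mG NN X y θ ξ) θs ξ := by
    rw [hflip]; rfl
  rw [happ]
  -- compute fderiv of the scalar function
  have hψ : ∀ n : ν, HasFDerivAt (fun θ => mDer X n θ ξ)
      (fderiv ℝ (fun θ => mDer X n θ ξ) θs) θs := fun n =>
    (DifferentiableAt.clm_apply (diffAt_mDer X n θs)
      (differentiableAt_const ξ)).hasFDerivAt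
  have hG : HasFDerivAt (fun θ => mG NN X y θ ξ)
      ((1 / NN) • ∑ n, ((mPhi X y n θs) • (fderiv ℝ (fun θ => mDer X n θ ξ) θs)
          + (mDer X n θs ξ) • mDer X n θs)) θs := by
    have hbody : HasFDerivAt (fun θ => ∑ n, mPhi X y n θ * (mDer X n θ ξ))
        (∑ n, ((mPhi X y n θs) • (fderiv ℝ (fun θ => mDer X n θ ξ) θs)
          + (mDer X n θs ξ) • mDer X n θs)) θs := by
      refine HasFDerivAt.fun_sum fun n _ => ?_
      exact (hasFDerivAt_phi X y n θs).mul (hψ n)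
    have h2 := hbody.const_mul (1 / NN)
    have heq : (fun θ => mG NN X y θ ξ)
        = fun θ => (1 / NN) * ∑ n, mPhi X y n θ * (mDer X n θ ξ) := by
      funext θ
      simp [mG, ContinuousLinearMap.sum_apply, smul_eq_mul, Finset.mul_sum]
    rw [heq]
    exact h2
  rw [hG.fderiv]
  simp only [hphi0, zero_smul, zero_add, ContinuousLinearMap.smul_apply,
    ContinuousLinearMap.sum_apply, smul_eq_mul]
  congr 1
  refine Finset.sum_congr rfl fun n _ => ?_
  ring

end Aux3

section Aux4

lemma ortho_expand {R M : Type*} [Fintype R] [Fintype M] [DecidableEq R]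
    (w : R → M → ℝ)
    (hw : ∀ i j, ∑ m, w i m * w j m = if i = j then (1 : ℝ) else 0) (c : R → ℝ) :
    ∑ m, (∑ i, c i * w i m) ^ 2 = ∑ i, c i ^ 2 := by
  have h1 : ∀ m, (∑ i, c i * w i m) ^ 2
      = ∑ i, ∑ i', (c i * c i') * (w i m * w i' m) := by
    intro m
    rw [pow_two, Finset.sum_mul_sum]
    exact Finset.sum_congr rfl fun i _ => Finset.sum_congr rfl fun i' _ => by ring
  simp_rw [h1]
  rw [Finset.sum_comm]
  have h2 : ∀ i, ∑ m, ∑ i', (c i * c i') * (w i m * w i' m) = c i ^ 2 := by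
    intro i
    rw [Finset.sum_comm]
    have h3 : ∀ i', ∑ m, (c i * c i') * (w i m * w i' m)
        = (c i * c i') * (if i = i' then (1:ℝ) else 0) := by
      intro i'
      rw [← Finset.mul_sum, hw i i']
    simp_rw [h3]
    simp [mul_ite, Finset.sum_ite_eq, pow_two]
  exact Finset.sum_congr rfl fun i _ => h2 i

lemma bessel_ineq {R M : Type*} [Fintype R] [Fintype M] [DecidableEq R]
    (w : R → M → ℝ)
    (hw : ∀ i j, ∑ m, w i m * w j m = if i = j then (1 : ℝ) else 0) (z : M → ℝ) :
    ∑ i, (∑ m, w i m * z m) ^ 2 ≤ ∑ m, z m ^ 2 := by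
  set b : R → ℝ := fun i => ∑ m, w i m * z m with hb
  have h0 : (0:ℝ) ≤ ∑ m, (z m - ∑ i, b i * w i m) ^ 2 :=
    Finset.sum_nonneg fun m _ => sq_nonneg _
  have hcross : ∑ m, z m * (∑ i, b i * w i m) = ∑ i, b i ^ 2 := by
    have : ∀ m, z m * (∑ i, b i * w i m) = ∑ i, b i * (w i m * z m) := by
      intro m; rw [Finset.mul_sum]; exact Finset.sum_congr rfl fun i _ => by ring
    simp_rw [this]
    rw [Finset.sum_comm]
    refine Finset.sum_congr rfl fun i _ => ?_
    rw [← Finset.mul_sum]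
    show b i * b i = b i ^ 2
    ring
  have hgram : ∑ m, (∑ i, b i * w i m) ^ 2 = ∑ i, b i ^ 2 := ortho_expand w hw b
  have hexp : ∑ m, (z m - ∑ i, b i * w i m) ^ 2
      = ∑ m, z m ^ 2 - 2 * (∑ i, b i ^ 2) + ∑ i, b i ^ 2 := by
    have : ∀ m, (z m - ∑ i, b i * w i m) ^ 2
        = z m ^ 2 - 2 * (z m * (∑ i, b i * w i m)) + (∑ i, b i * w i m) ^ 2 := by
      intro m; ring
    simp_rw [this]
    rw [Finset.sum_add_distrib, Finset.sum_sub_distrib, ← Finset.mul_sum, hcross, hgram]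
  rw [hexp] at h0
  linarith

lemma key_ineq (X2 Y2 A2 M2 β τ cross : ℝ) (hX2 : 0 ≤ X2) (hY2 : 0 ≤ Y2)
    (hA2 : 0 ≤ A2) (hM2 : 0 ≤ M2) (hβ : 0 ≤ β) (hτ : 0 ≤ τ)
    (h1 : X2 ≤ A2 * β) (h2 : Y2 ≤ M2 * τ) (h3 : β + τ ≤ 1) (h4 : cross ^ 2 ≤ X2 * Y2) :
    X2 + 2 * cross + Y2 ≤ A2 + M2 := by
  have hc2 : cross ^ 2 ≤ (A2 * β) * (M2 * τ) :=
    le_trans h4 (mul_le_mul h1 h2 hY2 (by positivity))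
  have h5 : 2 * cross ≤ A2 * τ + M2 * β := by
    nlinarith [sq_nonneg (A2 * τ - M2 * β), sq_nonneg (A2 * τ + M2 * β - 2 * cross),
      mul_nonneg hA2 hτ, mul_nonneg hM2 hβ]
  nlinarith [mul_nonneg hA2 hτ, mul_nonneg hM2 hβ, mul_nonneg hA2 hβ, mul_nonneg hM2 hτ]

end Aux4



set_option maxHeartbeats 1600000 in
/-- **Sharpness at a balanced minimizer, depth-`D` minimalist model.** -/
theorem deep_sharpness_at_balanced_minimizer
    (N dd r D : ℕ) (hN : 0 < N) (hr : 0 < r) (hD : 2 ≤ D)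
    (X : Matrix (Fin N) (Fin dd) ℝ)
    (σ : Fin r → ℝ) (e : Fin r → Fin N → ℝ) (w : Fin r → Fin dd → ℝ)
    (dc : Fin r → ℝ) (y : Fin N → ℝ)
    (hσpos : ∀ i, 0 < σ i)
    (hσdec : ∀ i j : Fin r, i ≤ j → σ j ≤ σ i)
    (he : ∀ i j : Fin r, ∑ n, e i n * e j n = if i = j then (1 : ℝ) else 0)
    (hw : ∀ i j : Fin r, ∑ m, w i m * w j m = if i = j then (1 : ℝ) else 0)
    (hX : ∀ n m, X n m = ∑ i, σ i * e i n * w i m)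
    (hrank : X.rank = r)
    (hy : ∀ n, y n = ∑ i, dc i * e i n)
    (L : EuclideanSpace ℝ (Fin dd ⊕ Fin (D - 1)) → ℝ)
    (hL : ∀ θ, L θ = (1 / (2 * (N : ℝ))) *
      ∑ n, ((∑ m, X n m * θ (Sum.inl m)) * (∏ j, θ (Sum.inr j)) - y n) ^ 2)
    (Q : ℝ) (hQ : Q = ∑ i, dc i ^ 2 / σ i ^ 2) (hQpos : 0 < Q)
    (θs : EuclideanSpace ℝ (Fin dd ⊕ Fin (D - 1)))
    (hmin : ∀ θ, L θs ≤ L θ) (hzero : L θs = 0)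
    (hbal : ∀ j : Fin (D - 1),
      Real.sqrt (∑ i, (∑ m, w i m * θs (Sum.inl m)) ^ 2) = |θs (Sum.inr j)|) :
    (1 / (N : ℝ)) * (σ ⟨0, hr⟩ ^ 2 * Q ^ (((D : ℝ) - 1) / (D : ℝ))
        + ((D : ℝ) - 1) * dc ⟨0, hr⟩ ^ 2 * Q ^ (-(1 : ℝ) / (D : ℝ)))
      ≤ sharpness L θs ∧
    sharpness L θs ≤ (1 / (N : ℝ)) * (σ ⟨0, hr⟩ ^ 2 * Q ^ (((D : ℝ) - 1) / (D : ℝ))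
        + ((D : ℝ) - 1) * (∑ i, dc i ^ 2) * Q ^ (-(1 : ℝ) / (D : ℝ))) := by
  classical
  have hDcast : ((D - 1 : ℕ) : ℝ) = (D : ℝ) - 1 := by
    rw [Nat.cast_sub (by omega)]; simp
  have hD1 : (1:ℝ) ≤ (D:ℝ) := by exact_mod_cast Nat.one_le_of_lt hD
  have hDne : (D:ℝ) ≠ 0 := by positivity
  have hNNpos : (0:ℝ) < (N:ℝ) := by exact_mod_cast hN
  have hNNne : (N:ℝ) ≠ 0 := ne_of_gt hNNpos
  obtain ⟨u, hu⟩ : ∃ u : Fin dd → ℝ, ∀ m, θs (Sum.inl m) = u m := ⟨_, fun _ => rfl⟩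
  obtain ⟨v, hv⟩ : ∃ v : Fin (D - 1) → ℝ, ∀ j, θs (Sum.inr j) = v j := ⟨_, fun _ => rfl⟩
  obtain ⟨P, hP⟩ : ∃ P : ℝ, ∏ j, v j = P := ⟨_, rfl⟩
  obtain ⟨α, hα⟩ : ∃ α : Fin r → ℝ, ∀ i, ∑ m, w i m * u m = α i := ⟨_, fun _ => rfl⟩
  -- L in mPhi form
  have hL' : ∀ θ, L θ = (1 / (2 * (N:ℝ))) * ∑ n, (mPhi (fun n m => X n m) y n θ) ^ 2 := by
    intro θ; rw [hL]; rfl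
  -- every residual vanishes at θs
  have hphi0 : ∀ n, mPhi (fun n m => X n m) y n θs = 0 := by
    intro n
    have h1 : (1 / (2 * (N:ℝ))) * ∑ n, (mPhi (fun n m => X n m) y n θs) ^ 2 = 0 := by
      rw [← hL' θs]; exact hzero
    have h2 : ∑ n, (mPhi (fun n m => X n m) y n θs) ^ 2 = 0 := by
      have hne : (1 / (2 * (N:ℝ))) ≠ 0 := by positivity
      exact (mul_eq_zero.mp h1).resolve_left hne
    have h3 := (Finset.sum_eq_zero_iff_of_nonneg
      (fun n _ => sq_nonneg (mPhi (fun n m => X n m) y n θs))).mp h2 n (Finset.mem_univ n)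
    exact (pow_eq_zero_iff two_ne_zero).mp h3
  -- sum exchange
  have hXsum : ∀ (n : Fin N) (z : Fin dd → ℝ),
      ∑ m, X n m * z m = ∑ i, σ i * e i n * (∑ m, w i m * z m) := by
    intro n z
    simp_rw [hX, Finset.sum_mul, Finset.mul_sum]
    rw [Finset.sum_comm]
    exact Finset.sum_congr rfl fun i _ => Finset.sum_congr rfl fun m _ => by ring
  -- coefficient identities
  have hcoef : ∀ i, σ i * α i * P = dc i := by
    have hc : ∀ n, ∑ i, (σ i * α i * P - dc i) * e i n = 0 := by
      intro n
      have hphi := hphi0 n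
      rw [mPhi] at hphi
      simp only [hu, hv, hP] at hphi
      have h5 : ∑ i, (σ i * α i * P - dc i) * e i n
          = (∑ m, X n m * u m) * P - y n := by
        rw [hXsum n u, Finset.sum_mul, hy, ← Finset.sum_sub_distrib]
        refine Finset.sum_congr rfl fun i _ => ?_
        rw [hα i]; ring
      rw [h5, hphi]
    have hsq : ∑ i, (σ i * α i * P - dc i) ^ 2 = 0 := by
      rw [← ortho_expand e he (fun i => σ i * α i * P - dc i)]
      refine Finset.sum_eq_zero fun n _ => ?_
      rw [hc n]; ring
    intro i
    have h6 := (Finset.sum_eq_zero_iff_of_nonneg (fun i _ => sq_nonneg _)).mp hsq i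
      (Finset.mem_univ i)
    have h7 := (pow_eq_zero_iff two_ne_zero).mp h6
    linarith
  -- P ≠ 0
  have hPne : P ≠ 0 := by
    intro hP0
    have hdc0 : ∀ i, dc i = 0 := by
      intro i; rw [← hcoef i, hP0]; ring
    rw [hQ] at hQpos
    have : ∑ i, dc i ^ 2 / σ i ^ 2 = 0 :=
      Finset.sum_eq_zero fun i _ => by rw [hdc0 i]; simp
    linarith
  have hP2pos : 0 < P ^ 2 := pow_two_pos_of_ne_zero hPne
  -- α values and sum
  have hαval : ∀ i, α i = dc i / (σ i * P) := by
    intro i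
    rw [eq_div_iff (mul_ne_zero (ne_of_gt (hσpos i)) hPne)]
    linear_combination hcoef i
  have hsumα : ∑ i, α i ^ 2 = Q / P ^ 2 := by
    rw [hQ, Finset.sum_div]
    refine Finset.sum_congr rfl fun i _ => ?_
    rw [hαval i]
    field_simp
  -- balancedness
  have hv2 : ∀ j, v j ^ 2 = Q / P ^ 2 := by
    intro j
    have hb := hbal j
    simp only [hu, hv] at hb
    have : ∑ i, (∑ m, w i m * u m) ^ 2 = Q / P ^ 2 := by
      simp_rw [hα]; exact hsumα
    rw [this] at hb
    rw [← sq_abs, ← hb, Real.sq_sqrt (by positivity)]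
  have hvne : ∀ j, v j ≠ 0 := by
    intro j hj
    have h8 : (0:ℝ) < Q / P ^ 2 := div_pos hQpos hP2pos
    rw [← hv2 j, hj] at h8
    simp at h8
  -- rpow identities
  have hprod2 : P ^ 2 = (Q / P ^ 2) ^ (D - 1 : ℕ) := by
    have h0 : P ^ 2 = ∏ j, v j ^ 2 := by
      rw [← hP, ← Finset.prod_pow]
    conv_lhs => rw [h0]
    simp only [hv2]
    rw [Finset.prod_const, Finset.card_univ, Fintype.card_fin]
  have hnat : (P ^ 2) ^ D = Q ^ (D - 1 : ℕ) := by
    have h9 : (P ^ 2) ^ D = P ^ 2 * (P ^ 2) ^ (D - 1 : ℕ) := by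
      rw [← pow_succ']
      congr 1
      omega
    rw [h9]
    nth_rewrite 1 [hprod2]
    rw [← mul_pow, div_mul_cancel₀ _ (ne_of_gt hP2pos)]
  have hglob : P ^ 2 = Q ^ (((D:ℝ) - 1) / (D:ℝ)) := by
    have h1 : (P ^ 2 : ℝ) ^ (D:ℝ) = Q ^ ((D:ℝ) - 1) := by
      rw [← hDcast, Real.rpow_natCast, Real.rpow_natCast, hnat]
    have h2 : ((P ^ 2 : ℝ) ^ (D:ℝ)) ^ ((D:ℝ)⁻¹) = P ^ 2 := by
      rw [← Real.rpow_mul (le_of_lt hP2pos), mul_inv_cancel₀ hDne, Real.rpow_one]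
    rw [← h2, h1, ← Real.rpow_mul (le_of_lt hQpos), div_eq_mul_inv]
  have hQexp : Q ^ (-(1:ℝ) / (D:ℝ)) = P ^ 2 / Q := by
    have h10 : (-(1:ℝ) / (D:ℝ)) = ((D:ℝ) - 1) / (D:ℝ) - 1 := by
      field_simp
      ring
    rw [h10, Real.rpow_sub hQpos, Real.rpow_one, ← hglob]
  -- erase products
  have hprod_erase : ∀ j, ∏ k ∈ Finset.univ.erase j, v k = P / v j := by
    intro j
    rw [eq_div_iff (hvne j), mul_comm, Finset.mul_prod_erase _ v (Finset.mem_univ j), hP]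
  -- the quadratic form
  have hquad : ∀ ξ : EuclideanSpace ℝ (Fin dd ⊕ Fin (D - 1)),
      fderiv ℝ (fderiv ℝ L) θs ξ ξ = (1 / (N:ℝ)) *
        ∑ i, (P * σ i * (∑ m, w i m * ξ (Sum.inl m))
          + dc i * (∑ j, ξ (Sum.inr j) / v j)) ^ 2 := by
    intro ξ
    rw [second_deriv (N:ℝ) hNNne (fun n m => X n m) y L hL' θs hphi0 ξ]
    congr 1
    have hmd : ∀ n, mDer (fun n m => X n m) n θs ξ
        = ∑ i, (P * σ i * (∑ m, w i m * ξ (Sum.inl m))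
            + dc i * (∑ j, ξ (Sum.inr j) / v j)) * e i n := by
      intro n
      rw [mDer_apply]
      simp only [hu, hv, hprod_erase]
      rw [hXsum n u, hXsum n (fun m => ξ (Sum.inl m))]
      have hCS : ∑ j, (P / v j) * ξ (Sum.inr j)
          = P * ∑ j, ξ (Sum.inr j) / v j := by
        rw [Finset.mul_sum]
        exact Finset.sum_congr rfl fun j _ => by ring
      rw [hP, hCS]
      simp only [hα]
      trans (∑ i, ((σ i * e i n * α i) * (P * ∑ j, ξ (Sum.inr j) / v j)
              + P * (σ i * e i n * (∑ m, w i m * ξ (Sum.inl m)))))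
      · rw [Finset.sum_add_distrib, ← Finset.sum_mul, ← Finset.mul_sum]
      · refine Finset.sum_congr rfl fun i _ => ?_
        rw [← hcoef i]; ring
    simp_rw [hmd]
    exact ortho_expand e he _
  -- common facts
  have hDm1 : (0:ℝ) ≤ (D:ℝ) - 1 := by linarith
  have hsig : ∀ i : Fin r, σ i ≤ σ ⟨0, hr⟩ := by
    intro i
    exact hσdec ⟨0, hr⟩ i (by simp [Fin.le_def])
  have hdcnn : (0:ℝ) ≤ ∑ i, dc i ^ 2 := Finset.sum_nonneg fun i _ => sq_nonneg _
  have hvsq : ∑ j : Fin (D - 1), (1 / v j) ^ 2 = ((D:ℝ) - 1) * (P ^ 2 / Q) := by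
    have h5 : ∀ j, (1 / v j : ℝ) ^ 2 = P ^ 2 / Q := by
      intro j
      rw [div_pow, one_pow, hv2 j, one_div_div]
    simp_rw [h5]
    rw [Finset.sum_const, Finset.card_univ, Fintype.card_fin, nsmul_eq_mul, hDcast]
  have hUB0 : (0:ℝ) ≤ (1 / (N : ℝ)) * (σ ⟨0, hr⟩ ^ 2 * Q ^ (((D : ℝ) - 1) / (D : ℝ))
      + ((D : ℝ) - 1) * (∑ i, dc i ^ 2) * Q ^ (-(1 : ℝ) / (D : ℝ))) := by
    have h1 : (0:ℝ) ≤ Q ^ (((D : ℝ) - 1) / (D : ℝ)) := Real.rpow_nonneg (le_of_lt hQpos) _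
    have h2 : (0:ℝ) ≤ Q ^ (-(1:ℝ) / (D : ℝ)) := Real.rpow_nonneg (le_of_lt hQpos) _
    have h6 := add_nonneg (mul_nonneg (sq_nonneg (σ (⟨0, hr⟩ : Fin r))) h1)
      (mul_nonneg (mul_nonneg hDm1 hdcnn) h2)
    have h7 : (0:ℝ) ≤ 1 / (N:ℝ) := by positivity
    exact mul_nonneg h7 h6
  -- pointwise upper bound on the quadratic form
  have hUBpt : ∀ ξ : EuclideanSpace ℝ (Fin dd ⊕ Fin (D - 1)), ‖ξ‖ = 1 →
      (1 / (N:ℝ)) * ∑ i, (P * σ i * (∑ m, w i m * ξ (Sum.inl m))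
          + dc i * (∑ j, ξ (Sum.inr j) / v j)) ^ 2
        ≤ (1 / (N : ℝ)) * (σ ⟨0, hr⟩ ^ 2 * Q ^ (((D : ℝ) - 1) / (D : ℝ))
          + ((D : ℝ) - 1) * (∑ i, dc i ^ 2) * Q ^ (-(1 : ℝ) / (D : ℝ))) := by
    intro ξ hξ
    have hnorm1 : ∑ m, ξ (Sum.inl m) ^ 2 + ∑ j, ξ (Sum.inr j) ^ 2 = 1 := by
      have h1 := EuclideanSpace.norm_eq ξ
      rw [hξ] at h1
      have h2 : ∑ x, ‖ξ x‖ ^ 2 = 1 := Real.sqrt_eq_one.mp h1.symm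
      rw [Fintype.sum_sum_type] at h2
      simpa [Real.norm_eq_abs, sq_abs] using h2
    set b : Fin r → ℝ := fun i => ∑ m, w i m * ξ (Sum.inl m) with hb
    set S : ℝ := ∑ j, ξ (Sum.inr j) / v j with hS
    have hBle : ∑ i, b i ^ 2 ≤ ∑ m, ξ (Sum.inl m) ^ 2 := bessel_ineq w hw _
    have hBnn : (0:ℝ) ≤ ∑ i, b i ^ 2 := Finset.sum_nonneg fun _ _ => sq_nonneg _
    have hTnn : (0:ℝ) ≤ ∑ j, ξ (Sum.inr j) ^ 2 := Finset.sum_nonneg fun _ _ => sq_nonneg _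
    have hS2 : S ^ 2 ≤ (((D:ℝ) - 1) * (P ^ 2 / Q)) * ∑ j, ξ (Sum.inr j) ^ 2 := by
      have h6 : S = ∑ j, (1 / v j) * ξ (Sum.inr j) := by
        rw [hS]; exact Finset.sum_congr rfl fun j _ => by ring
      rw [h6]
      have h7 := Finset.sum_mul_sq_le_sq_mul_sq Finset.univ
        (fun j => 1 / v j) (fun j => ξ (Sum.inr j))
      rw [hvsq] at h7
      exact h7
    have hexp : ∑ i, (P * σ i * b i + dc i * S) ^ 2
        = (∑ i, (P * σ i * b i) ^ 2) + 2 * (∑ i, (P * σ i * b i) * (dc i * S))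
          + (∑ i, (dc i * S) ^ 2) := by
      have h8 : ∀ i : Fin r, (P * σ i * b i + dc i * S) ^ 2
          = ((P * σ i * b i) ^ 2 + (P * σ i * b i) * (dc i * S) * 2) + (dc i * S) ^ 2 := by
        intro i; ring
      simp_rw [h8]
      rw [Finset.sum_add_distrib, Finset.sum_add_distrib, ← Finset.sum_mul]
      ring
    have hX2le : ∑ i, (P * σ i * b i) ^ 2 ≤ (σ ⟨0,hr⟩ ^ 2 * P ^ 2) * ∑ i, b i ^ 2 := by
      rw [Finset.mul_sum]
      refine Finset.sum_le_sum fun i _ => ?_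
      have h9 : σ i ^ 2 ≤ σ ⟨0,hr⟩ ^ 2 := pow_le_pow_left₀ (le_of_lt (hσpos i)) (hsig i) 2
      calc (P * σ i * b i) ^ 2 = σ i ^ 2 * (P ^ 2 * b i ^ 2) := by ring
        _ ≤ σ ⟨0,hr⟩ ^ 2 * (P ^ 2 * b i ^ 2) :=
            mul_le_mul_of_nonneg_right h9 (by positivity)
        _ = σ ⟨0,hr⟩ ^ 2 * P ^ 2 * b i ^ 2 := by ring
    have hY2 : ∑ i, (dc i * S) ^ 2 = (∑ i, dc i ^ 2) * S ^ 2 := by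
      rw [Finset.sum_mul]
      exact Finset.sum_congr rfl fun i _ => by ring
    have hX2nn : (0:ℝ) ≤ ∑ i, (P * σ i * b i) ^ 2 :=
      Finset.sum_nonneg fun _ _ => sq_nonneg _
    have hY2nn : (0:ℝ) ≤ ∑ i, (dc i * S) ^ 2 :=
      Finset.sum_nonneg fun _ _ => sq_nonneg _
    have hcr : (∑ i, (P * σ i * b i) * (dc i * S)) ^ 2
        ≤ (∑ i, (P * σ i * b i) ^ 2) * (∑ i, (dc i * S) ^ 2) :=
      Finset.sum_mul_sq_le_sq_mul_sq _ _ _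
    have hM2nn : (0:ℝ) ≤ (∑ i, dc i ^ 2) * (((D:ℝ) - 1) * (P ^ 2 / Q)) :=
      mul_nonneg hdcnn (mul_nonneg hDm1 (by positivity))
    have hA2nn : (0:ℝ) ≤ σ ⟨0,hr⟩ ^ 2 * P ^ 2 := by positivity
    have hY2le : ∑ i, (dc i * S) ^ 2
        ≤ ((∑ i, dc i ^ 2) * (((D:ℝ) - 1) * (P ^ 2 / Q))) * ∑ j, ξ (Sum.inr j) ^ 2 := by
      rw [hY2, mul_assoc]
      exact mul_le_mul_of_nonneg_left hS2 hdcnn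
    have hkey := key_ineq (∑ i, (P * σ i * b i) ^ 2) (∑ i, (dc i * S) ^ 2)
      (σ ⟨0,hr⟩ ^ 2 * P ^ 2) ((∑ i, dc i ^ 2) * (((D:ℝ) - 1) * (P ^ 2 / Q)))
      (∑ i, b i ^ 2) (∑ j, ξ (Sum.inr j) ^ 2) (∑ i, (P * σ i * b i) * (dc i * S))
      hX2nn hY2nn hA2nn hM2nn hBnn hTnn hX2le hY2le (by linarith) hcr
    have hfin : ∑ i, (P * σ i * b i + dc i * S) ^ 2
        ≤ σ ⟨0,hr⟩ ^ 2 * P ^ 2 + (∑ i, dc i ^ 2) * (((D:ℝ) - 1) * (P ^ 2 / Q)) := by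
      rw [hexp]; exact hkey
    calc (1 / (N:ℝ)) * ∑ i, (P * σ i * b i + dc i * S) ^ 2
        ≤ (1 / (N:ℝ)) * (σ ⟨0,hr⟩ ^ 2 * P ^ 2
            + (∑ i, dc i ^ 2) * (((D:ℝ) - 1) * (P ^ 2 / Q))) := by
          exact mul_le_mul_of_nonneg_left hfin (by positivity)
      _ = (1 / (N : ℝ)) * (σ ⟨0, hr⟩ ^ 2 * Q ^ (((D : ℝ) - 1) / (D : ℝ))
            + ((D : ℝ) - 1) * (∑ i, dc i ^ 2) * Q ^ (-(1 : ℝ) / (D : ℝ))) := by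
          rw [hQexp, hglob]; ring
  -- the maximizing direction
  obtain ⟨R, hR⟩ : ∃ R : ℝ, σ ⟨0,hr⟩ ^ 2 * P ^ 2
      + dc ⟨0,hr⟩ ^ 2 * (((D:ℝ) - 1) * (P ^ 2 / Q)) = R := ⟨_, rfl⟩
  have hRpos : 0 < R := by
    rw [← hR]
    have h5 : (0:ℝ) ≤ dc ⟨0,hr⟩ ^ 2 * (((D:ℝ) - 1) * (P ^ 2 / Q)) :=
      mul_nonneg (sq_nonneg _) (mul_nonneg hDm1 (by positivity))
    have h6 : (0:ℝ) < σ ⟨0,hr⟩ ^ 2 * P ^ 2 := mul_pos (pow_pos (hσpos _) 2) hP2pos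
    linarith
  obtain ⟨ρ, hρ⟩ : ∃ ρ : ℝ, (Real.sqrt R)⁻¹ = ρ := ⟨_, rfl⟩
  have hρ2 : ρ ^ 2 = 1 / R := by
    rw [← hρ, inv_pow, Real.sq_sqrt (le_of_lt hRpos), one_div]
  obtain ⟨ξ0, hξ0⟩ : ∃ ξ0 : EuclideanSpace ℝ (Fin dd ⊕ Fin (D - 1)),
      ξ0 = (WithLp.equiv 2 _).symm (Sum.elim
        (fun m => ρ * (P * σ ⟨0,hr⟩ * w ⟨0,hr⟩ m))
        (fun j => ρ * (dc ⟨0,hr⟩ / v j))) := ⟨_, rfl⟩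
  have hξ0l : ∀ m, ξ0 (Sum.inl m) = ρ * (P * σ ⟨0,hr⟩ * w ⟨0,hr⟩ m) := by
    intro m; rw [hξ0]; rfl
  have hξ0r : ∀ j, ξ0 (Sum.inr j) = ρ * (dc ⟨0,hr⟩ / v j) := by
    intro j; rw [hξ0]; rfl
  have hb0 : ∀ i, ∑ m, w i m * ξ0 (Sum.inl m)
      = (ρ * (P * σ ⟨0,hr⟩)) * (if i = ⟨0,hr⟩ then (1:ℝ) else 0) := by
    intro i
    simp_rw [hξ0l]
    rw [← hw i ⟨0,hr⟩, Finset.mul_sum]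
    exact Finset.sum_congr rfl fun m _ => by ring
  have hS0 : ∑ j, ξ0 (Sum.inr j) / v j = ρ * dc ⟨0,hr⟩ * (((D:ℝ) - 1) * (P ^ 2 / Q)) := by
    simp_rw [hξ0r]
    have h5 : ∀ j, (ρ * (dc ⟨0,hr⟩ / v j)) / v j = (ρ * dc ⟨0,hr⟩) * (1 / v j) ^ 2 := by
      intro j
      field_simp
    simp_rw [h5]
    rw [← Finset.mul_sum, hvsq]
  have hnrm : ‖ξ0‖ = 1 := by
    rw [EuclideanSpace.norm_eq]
    have h6 : ∑ x, ‖ξ0 x‖ ^ 2 = 1 := by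
      rw [Fintype.sum_sum_type]
      simp only [Real.norm_eq_abs, sq_abs]
      have h1 : ∑ m, ξ0 (Sum.inl m) ^ 2 = ρ ^ 2 * (P ^ 2 * σ ⟨0,hr⟩ ^ 2) := by
        simp_rw [hξ0l]
        have h7 : ∀ m, (ρ * (P * σ ⟨0,hr⟩ * w ⟨0,hr⟩ m)) ^ 2
            = (ρ ^ 2 * (P ^ 2 * σ ⟨0,hr⟩ ^ 2)) * (w ⟨0,hr⟩ m * w ⟨0,hr⟩ m) := by
          intro m; ring
        simp_rw [h7]
        rw [← Finset.mul_sum, hw ⟨0,hr⟩ ⟨0,hr⟩, if_pos rfl, mul_one]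
      have h2 : ∑ j, ξ0 (Sum.inr j) ^ 2
          = ρ ^ 2 * dc ⟨0,hr⟩ ^ 2 * (((D:ℝ) - 1) * (P ^ 2 / Q)) := by
        simp_rw [hξ0r]
        have h8 : ∀ j, (ρ * (dc ⟨0,hr⟩ / v j)) ^ 2
            = (ρ ^ 2 * dc ⟨0,hr⟩ ^ 2) * (1 / v j) ^ 2 := by
          intro j; ring
        simp_rw [h8]
        rw [← Finset.mul_sum, hvsq]
      rw [h1, h2]
      have h9 : ρ ^ 2 * (P ^ 2 * σ ⟨0,hr⟩ ^ 2) + ρ ^ 2 * dc ⟨0,hr⟩ ^ 2 * (((D:ℝ) - 1) * (P ^ 2 / Q))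
          = ρ ^ 2 * R := by
        rw [← hR]; ring
      rw [h9, hρ2, one_div, inv_mul_cancel₀ (ne_of_gt hRpos)]
    rw [h6, Real.sqrt_one]
  have hval : (1 / (N:ℝ)) * R ≤ (1 / (N:ℝ)) *
      ∑ i, (P * σ i * (∑ m, w i m * ξ0 (Sum.inl m))
        + dc i * (∑ j, ξ0 (Sum.inr j) / v j)) ^ 2 := by
    have hterm : (P * σ ⟨0,hr⟩ * (∑ m, w ⟨0,hr⟩ m * ξ0 (Sum.inl m))
        + dc ⟨0,hr⟩ * (∑ j, ξ0 (Sum.inr j) / v j)) ^ 2 = (ρ * R) ^ 2 := by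
      rw [hb0 ⟨0,hr⟩, if_pos rfl, hS0, ← hR]
      ring
    have hsumge : (ρ * R) ^ 2 ≤ ∑ i, (P * σ i * (∑ m, w i m * ξ0 (Sum.inl m))
        + dc i * (∑ j, ξ0 (Sum.inr j) / v j)) ^ 2 := by
      rw [← hterm]
      exact Finset.single_le_sum
        (f := fun i => (P * σ i * (∑ m, w i m * ξ0 (Sum.inl m))
          + dc i * (∑ j, ξ0 (Sum.inr j) / v j)) ^ 2)
        (fun i _ => sq_nonneg _) (Finset.mem_univ (⟨0,hr⟩ : Fin r))
    have hρR : (ρ * R) ^ 2 = R := by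
      calc (ρ * R) ^ 2 = ρ ^ 2 * R ^ 2 := by ring
        _ = R⁻¹ * R ^ 2 := by rw [hρ2, one_div]
        _ = R := by
            rw [pow_two, ← mul_assoc, inv_mul_cancel₀ (ne_of_gt hRpos), one_mul]
    rw [← hρR]
    exact mul_le_mul_of_nonneg_left hsumge (by positivity)
  -- assembling
  have hbdd : BddAbove {c : ℝ | ∃ ξ : EuclideanSpace ℝ (Fin dd ⊕ Fin (D - 1)),
      ‖ξ‖ = 1 ∧ fderiv ℝ (fderiv ℝ L) θs ξ ξ = c} := by
    refine ⟨(1 / (N : ℝ)) * (σ ⟨0, hr⟩ ^ 2 * Q ^ (((D : ℝ) - 1) / (D : ℝ))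
      + ((D : ℝ) - 1) * (∑ i, dc i ^ 2) * Q ^ (-(1 : ℝ) / (D : ℝ))), ?_⟩
    rintro c ⟨ξ, hξ, rfl⟩
    rw [hquad ξ]
    exact hUBpt ξ hξ
  constructor
  · have hmem : fderiv ℝ (fderiv ℝ L) θs ξ0 ξ0 ∈ {c : ℝ |
        ∃ ξ : EuclideanSpace ℝ (Fin dd ⊕ Fin (D - 1)),
        ‖ξ‖ = 1 ∧ fderiv ℝ (fderiv ℝ L) θs ξ ξ = c} := ⟨ξ0, hnrm, rfl⟩
    have hle := le_csSup hbdd hmem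
    refine le_trans ?_ hle
    rw [hquad ξ0]
    refine le_trans (le_of_eq ?_) hval
    rw [← hR, hQexp, hglob]
    ring
  · refine Real.sSup_le ?_ hUB0
    rintro c ⟨ξ, hξ, rfl⟩
    rw [hquad ξ]
    exact hUBpt ξ hξ
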